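/- Let U be a nonprincipal ultrafilter on ℕ and let f : ℕ → ℕ satisfy f(n) ≥ n for all n. Then the family G_f = {X ⊆ ℕ : X is infinite and f <_U ν_X} is groupwise dense, where f <_U ν_X means {n : f(n) < ν_X(n)} ∈ U. -/
import Mathlib


open Cardinal Set Filter

/-- A nonprincipal ultrafilter on ℕ: one that is not of the form `pure n`. -/
def Nonprincipal (U : Ultrafilter ℕ) : Prop := ∀ n : ℕ, U ≠ pure n

/-- `C` is cofinal in the ultrapower `U-prod ω` with respect to `≤_U`. -/
def UCofinal (U : Ultrafilter ℕ) (C : Set (ℕ → ℕ)) : Prop :=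
  ∀ f : ℕ → ℕ, ∃ g ∈ C, {n : ℕ | f n ≤ g n} ∈ U

/-- The cofinality of the ultrapower `U-prod ω`: the least cardinality of a
set of functions cofinal with respect to `≤_U`. -/
noncomputable def cfUProd (U : Ultrafilter ℕ) : Cardinal :=
  sInf {c : Cardinal | ∃ C : Set (ℕ → ℕ), UCofinal U C ∧ c = #C}

/-- The bounding number 𝔟. -/
noncomputable def boundingNumber : Cardinal :=
  sInf {c : Cardinal | ∃ B : Set (ℕ → ℕ),
    (∀ f : ℕ → ℕ, ∃ g ∈ B, {n : ℕ | f n ≤ g n}.Infinite) ∧ c = #B}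

/-- The dominating number 𝔡. -/
noncomputable def dominatingNumber : Cardinal :=
  sInf {c : Cardinal | ∃ D : Set (ℕ → ℕ),
    (∀ f : ℕ → ℕ, ∃ g ∈ D, {n : ℕ | ¬ f n ≤ g n}.Finite) ∧ c = #D}

/-- The splitting number 𝔰. -/
noncomputable def splittingNumber : Cardinal :=
  sInf {c : Cardinal | ∃ S : Set (Set ℕ),
    (∀ X : Set ℕ, X.Infinite → ∃ Y ∈ S, (X ∩ Y).Infinite ∧ (X \ Y).Infinite) ∧ c = #S}

/-- A family of infinite subsets of ℕ is groupwise dense if it is closed under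
infinite subsets and finite modifications and, for every partition of ℕ into
consecutive finite intervals (given by a strictly increasing sequence starting
at 0), the union of some infinitely many of the intervals is in the family. -/
def GroupwiseDense (G : Set (Set ℕ)) : Prop :=
  (∀ X ∈ G, X.Infinite) ∧
  (∀ X ∈ G, ∀ Y : Set ℕ, Y ⊆ X → Y.Infinite → Y ∈ G) ∧
  (∀ X ∈ G, ∀ Y : Set ℕ, (symmDiff X Y).Finite → Y ∈ G) ∧
  (∀ a : ℕ → ℕ, a 0 = 0 → StrictMono a →
    ∃ K : Set ℕ, K.Infinite ∧ (⋃ k ∈ K, Set.Ico (a k) (a (k + 1))) ∈ G)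

/-- The groupwise density number 𝔤. -/
noncomputable def groupwiseDensityNumber : Cardinal :=
  sInf {c : Cardinal | ∃ 𝒢 : Set (Set (Set ℕ)),
    (∀ G ∈ 𝒢, GroupwiseDense G) ∧ ⋂₀ 𝒢 = ∅ ∧ c = #𝒢}

/-- `U` is a pseudo-P_κ point. -/
def PseudoPPoint (U : Ultrafilter ℕ) (κ : Cardinal) : Prop :=
  ∀ F : Set (Set ℕ), (∀ A ∈ F, A ∈ U) → #F < κ →
    ∃ A : Set ℕ, A.Infinite ∧ ∀ B ∈ F, (A \ B).Finite

/-- A finite-to-one function on ℕ. -/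
def FinToOne (f : ℕ → ℕ) : Prop := ∀ n : ℕ, (f ⁻¹' {n}).Finite

/-- Two ultrafilters are nearly coherent if they have a common image under
finite-to-one maps. -/
def NearlyCoherent (U U' : Ultrafilter ℕ) : Prop :=
  ∃ f f' : ℕ → ℕ, FinToOne f ∧ FinToOne f' ∧
    Ultrafilter.map f U = Ultrafilter.map f' U'

/-- `nuX X n` is the least element of `X` greater than `n`. -/
noncomputable def nuX (X : Set ℕ) (n : ℕ) : ℕ := sInf {m : ℕ | m ∈ X ∧ n < m}

lemma nuX_mem_gt {X : Set ℕ} (hX : X.Infinite) (n : ℕ) :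
    nuX X n ∈ X ∧ n < nuX X n := by
  obtain ⟨m, hm1, hm2⟩ := hX.exists_gt n
  have h : sInf {m : ℕ | m ∈ X ∧ n < m} ∈ {m : ℕ | m ∈ X ∧ n < m} :=
    Nat.sInf_mem ⟨m, hm1, hm2⟩
  exact h

lemma nuX_le {X : Set ℕ} {n m : ℕ} (hm : m ∈ X) (hnm : n < m) : nuX X n ≤ m :=
  Nat.sInf_le ⟨hm, hnm⟩

lemma nonprincipal_cofinite {U : Ultrafilter ℕ} (hU : Nonprincipal U)
    {s : Set ℕ} (hs : s.Finite) : sᶜ ∈ U := by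
  rcases U.le_cofinite_or_eq_pure with h | ⟨a, ha⟩
  · exact h hs.compl_mem_cofinite
  · exact absurd ha (hU a)

/-- Auxiliary block sequence for the groupwise density argument. -/
noncomputable def bseq (a f : ℕ → ℕ) : ℕ → ℕ
  | 0 => 0
  | j + 1 => max (bseq a f j + 1) ((Finset.range (a (bseq a f j))).sup f + 1)

lemma bseq_strictMono (a f : ℕ → ℕ) : StrictMono (bseq a f) :=
  strictMono_nat_of_lt_succ fun j =>
    lt_of_lt_of_le (Nat.lt_succ_self _) (le_max_left _ _)

lemma bseq_bound {a : ℕ → ℕ} (f : ℕ → ℕ) (ha : StrictMono a) {j n : ℕ}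
    (hn : n < a (bseq a f j)) : f n < a (bseq a f (j + 1)) := by
  have h1 : f n ≤ (Finset.range (a (bseq a f j))).sup f :=
    Finset.le_sup (Finset.mem_range.mpr hn)
  have h2 : (Finset.range (a (bseq a f j))).sup f + 1 ≤ bseq a f (j + 1) :=
    le_max_right _ _
  have h3 : bseq a f (j + 1) ≤ a (bseq a f (j + 1)) := ha.le_apply
  omega

/-- For a nonprincipal ultrafilter U and f with f(n) ≥ n for all n, the family
G_f = {X : X infinite and f <_U ν_X} is groupwise dense. -/
theorem stmt_7 (U : Ultrafilter ℕ) (hU : Nonprincipal U) (f : ℕ → ℕ)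
    (hf : ∀ n : ℕ, n ≤ f n) :
    GroupwiseDense {X : Set ℕ | X.Infinite ∧ {n : ℕ | f n < nuX X n} ∈ U} := by
  refine ⟨fun X hX => hX.1, ?_, ?_, ?_⟩
  · -- closed under infinite subsets
    rintro X ⟨hXinf, hXU⟩ Y hYX hYinf
    refine ⟨hYinf, Filter.mem_of_superset hXU ?_⟩
    intro n hn
    have h := nuX_mem_gt hYinf n
    exact lt_of_lt_of_le hn (nuX_le (hYX h.1) h.2)
  · -- closed under finite modifications
    rintro X ⟨hXinf, hXU⟩ Y hsd
    have hYX : (Y \ X).Finite := hsd.subset fun m hm => Set.mem_symmDiff.mpr (Or.inr hm)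
    have hXY : (X \ Y).Finite := hsd.subset fun m hm => Set.mem_symmDiff.mpr (Or.inl hm)
    have hYinf : Y.Infinite := by
      intro hYfin
      have hsub : X ⊆ Y ∪ (X \ Y) := by
        intro x hx
        by_cases h : x ∈ Y
        · exact Set.mem_union_left _ h
        · exact Set.mem_union_right _ ⟨hx, h⟩
      exact hXinf ((hYfin.union hXY).subset hsub)
    obtain ⟨N, hN⟩ := hYX.bddAbove
    refine ⟨hYinf, Filter.mem_of_superset
      (U.inter_mem hXU (nonprincipal_cofinite hU (Set.finite_Iio N))) ?_⟩
    rintro n ⟨hn1, hn2⟩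
    simp only [Set.mem_compl_iff, Set.mem_Iio, not_lt] at hn2
    have h := nuX_mem_gt hYinf n
    have hmX : nuX Y n ∈ X := by
      by_contra hc
      have := hN ⟨h.1, hc⟩
      omega
    exact lt_of_lt_of_le hn1 (nuX_le hmX h.2)
  · -- partition clause
    intro a ha0 ha
    set b : ℕ → ℕ := bseq a f with hb
    have hbmono : StrictMono b := bseq_strictMono a f
    have habmono : StrictMono (a ∘ b) := ha.comp hbmono
    -- index of the block containing n
    set idx : ℕ → ℕ := fun n => sInf {j | n < a (b (j + 1))} with hidxdef
    have hidxne : ∀ n, n < a (b (n + 1)) := fun n =>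
      lt_of_lt_of_le (Nat.lt_succ_self n) (le_trans hbmono.le_apply ha.le_apply)
    have hidx1 : ∀ n, n < a (b (idx n + 1)) := by
      intro n
      have h : sInf {j | n < a (b (j + 1))} ∈ {j | n < a (b (j + 1))} :=
        Nat.sInf_mem ⟨n, hidxne n⟩
      exact h
    have hidx2 : ∀ n, a (b (idx n)) ≤ n := by
      intro n
      rcases Nat.eq_zero_or_pos (idx n) with h | h
      · rw [h]
        simp [hb, bseq, ha0]
      · obtain ⟨m, hm⟩ := Nat.exists_eq_add_of_lt h
        have hmlt : m < idx n := by omega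
        have : m ∉ {j | n < a (b (j + 1))} := Nat.notMem_of_lt_sInf hmlt
        simp only [Set.mem_setOf_eq, not_lt] at this
        have : a (b (m + 1)) ≤ n := this
        rwa [show idx n = m + 1 by omega]
    -- find residue class r mod 3 in U
    have hcover : {n | idx n % 3 = 0} ∪ ({n | idx n % 3 = 1} ∪ {n | idx n % 3 = 2}) ∈ U := by
      have : {n | idx n % 3 = 0} ∪ ({n | idx n % 3 = 1} ∪ {n | idx n % 3 = 2}) = Set.univ := by
        ext n
        simp only [Set.mem_union, Set.mem_setOf_eq, Set.mem_univ, iff_true]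
        omega
      rw [this]
      exact Filter.univ_mem
    have hr : ∃ r, r < 3 ∧ {n | idx n % 3 = r} ∈ U := by
      rcases Ultrafilter.union_mem_iff.mp hcover with h | h
      · exact ⟨0, by norm_num, h⟩
      rcases Ultrafilter.union_mem_iff.mp h with h | h
      · exact ⟨1, by norm_num, h⟩
      · exact ⟨2, by norm_num, h⟩
    obtain ⟨r, hr3, hrU⟩ := hr
    set r' : ℕ := (r + 2) % 3 with hr'
    set K : Set ℕ := ⋃ j ∈ {j : ℕ | j % 3 = r'}, Set.Ico (b j) (b (j + 1)) with hK
    have hJ : {j : ℕ | j % 3 = r'}.Infinite := by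
      apply Set.infinite_of_forall_exists_gt
      intro m
      exact ⟨3 * m + 3 + r', by simp only [Set.mem_setOf_eq]; omega, by omega⟩
    have hbK : ∀ j, j % 3 = r' → b j ∈ K := by
      intro j hj
      exact Set.mem_biUnion hj ⟨le_refl _, hbmono (Nat.lt_succ_self j)⟩
    have hKinf : K.Infinite :=
      Set.Infinite.mono (Set.image_subset_iff.mpr fun j hj => hbK j hj)
        (hJ.image hbmono.injective.injOn)
    refine ⟨K, hKinf, ?_⟩
    set Y : Set ℕ := ⋃ k ∈ K, Set.Ico (a k) (a (k + 1)) with hY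
    -- every element of Y lies in some block of residue r'
    have hYblock : ∀ m ∈ Y, ∃ j, j % 3 = r' ∧ a (b j) ≤ m ∧ m < a (b (j + 1)) := by
      intro m hm
      simp only [hY, Set.mem_iUnion, exists_prop] at hm
      obtain ⟨k, hk, hm1, hm2⟩ := hm
      simp only [hK, Set.mem_iUnion, exists_prop] at hk
      obtain ⟨j, hj, hk1, hk2⟩ := hk
      refine ⟨j, hj, le_trans (ha.monotone (hk1)) hm1,
        lt_of_lt_of_le hm2 (ha.monotone hk2)⟩
    have haY : ∀ j, j % 3 = r' → a (b j) ∈ Y := by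
      intro j hj
      exact Set.mem_biUnion (hbK j hj) ⟨le_refl _, ha (Nat.lt_succ_self (b j))⟩
    have hYinf : Y.Infinite :=
      Set.Infinite.mono (Set.image_subset_iff.mpr fun j hj => haY j hj)
        (hJ.image habmono.injective.injOn)
    refine ⟨hYinf, Filter.mem_of_superset hrU ?_⟩
    intro n hn
    simp only [Set.mem_setOf_eq] at hn ⊢
    set j := idx n with hjdef
    have hfb : f n < a (b (j + 2)) := bseq_bound f ha (hidx1 n)
    have h := nuX_mem_gt hYinf n
    obtain ⟨j', hj'r, hj'1, hj'2⟩ := hYblock _ h.1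
    -- nuX Y n > n ≥ a (b j), so j ≤ j'
    have hlow : a (b j) ≤ n := hidx2 n
    have hjj' : j ≤ j' := by
      by_contra hc
      push_neg at hc
      have : b (j' + 1) ≤ b j := hbmono.monotone (by omega)
      have : a (b (j' + 1)) ≤ a (b j) := ha.monotone this
      omega
    have hj2 : j + 2 ≤ j' := by omega
    calc f n < a (b (j + 2)) := hfb
      _ ≤ a (b j') := ha.monotone (hbmono.monotone hj2)
      _ ≤ nuX Y n := hj'1
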